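/- Let q ≥ 3 be an integer and B ∈ (0,1), and set χ = (1+B)/(B+q−1). Let P be a path with ℓ ≥ 2 vertices and let Λ be a subset of the vertices of P that includes both endpoints of the path. Then for every configuration τ : Λ → [q], it holds that μ_P(P is bichromatic | σ_Λ = τ) ≤ (4q/B)^{|Λ|}·χ^{ℓ−2|Λ|}, where μ_P is the q-state Potts distribution on P with parameter B. -/

import Mathlib

open scoped Classical

/-- Number of monochromatic edges of the configuration `σ` in the graph `G`. -/
noncomputable def mEdges {W : Type} [Fintype W] (G : SimpleGraph W) {q : ℕ}
    (σ : W → Fin q) : ℕ :=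
  (Finset.univ.filter fun e : Sym2 W => e ∈ G.edgeSet ∧ ∀ x ∈ e, ∀ y ∈ e, σ x = σ y).card

/-- Conditional probability of the event `A` given the event `C`, under the `q`-state
Potts distribution on `G` with parameter `B`. -/
noncomputable def pottsCond {W : Type} [Fintype W] (G : SimpleGraph W) (q : ℕ) (B : ℝ)
    (A C : Set (W → Fin q)) : ℝ :=
  (∑ σ : W → Fin q, if σ ∈ A ∧ σ ∈ C then B ^ mEdges G σ else 0) /
    ∑ σ : W → Fin q, if σ ∈ C then B ^ mEdges G σ else 0

noncomputable def wgt (B : ℝ) {q : ℕ} (a b : Fin q) : ℝ := if a = b then B else 1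
noncomputable def pw (B : ℝ) {q n : ℕ} (σ : Fin (n+1) → Fin q) : ℝ :=
  ∏ i : Fin n, wgt B (σ i.castSucc) (σ i.succ)

lemma wgt_nonneg {B : ℝ} (hB : 0 ≤ B) {q : ℕ} (a b : Fin q) : 0 ≤ wgt B a b := by
  unfold wgt; split <;> simp [hB]
lemma B_le_wgt {B : ℝ} (hB : B ≤ 1) {q : ℕ} (a b : Fin q) : B ≤ wgt B a b := by
  unfold wgt; split <;> simp [hB]
lemma pw_nonneg {B : ℝ} (hB : 0 ≤ B) {q n : ℕ} (σ : Fin (n+1) → Fin q) : 0 ≤ pw B σ :=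
  Finset.prod_nonneg fun i _ => wgt_nonneg hB _ _
lemma pw_cons {B : ℝ} {q n : ℕ} (c : Fin q) (σ : Fin (n+1) → Fin q) :
    pw B (Fin.cons c σ) = wgt B c (σ 0) * pw B σ := by
  unfold pw
  rw [Fin.prod_univ_succ]
  simp [← Fin.succ_castSucc]
lemma sum_wgt {B : ℝ} {q : ℕ} (x : Fin q) : ∑ c : Fin q, wgt B c x = (q : ℝ) - 1 + B := by
  have h : ∀ c : Fin q, wgt B c x = (if c = x then B - 1 else 0) + 1 := by
    intro c; unfold wgt; split <;> ring
  simp only [h, Finset.sum_add_distrib, Finset.sum_ite_eq', Finset.mem_univ, if_true,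
    Finset.sum_const, Finset.card_univ, Fintype.card_fin, nsmul_eq_mul, mul_one]
  ring
lemma sum_pi_succ {q n : ℕ} (F : (Fin (n+2) → Fin q) → ℝ) :
    ∑ σ : Fin (n+2) → Fin q, F σ
      = ∑ c : Fin q, ∑ σ : Fin (n+1) → Fin q, F (Fin.cons c σ) := by
  rw [← (Fin.consEquiv (fun _ : Fin (n+2) => Fin q)).sum_comp F, Fintype.sum_prod_type]
  simp [Fin.consEquiv]

lemma wgt_le_one {B : ℝ} (hB : B ≤ 1) {q : ℕ} (a b : Fin q) : wgt B a b ≤ 1 := by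
  unfold wgt; split <;> simp [hB]
lemma mEdges_path {q n : ℕ} (σ : Fin (n+1) → Fin q) :
    mEdges (SimpleGraph.pathGraph (n+1)) σ
      = (Finset.univ.filter fun i : Fin n => σ i.castSucc = σ i.succ).card := by
  unfold mEdges
  symm
  refine Finset.card_bij (fun (i : Fin n) _ => (s(i.castSucc, i.succ) : Sym2 (Fin (n+1)))) ?_ ?_ ?_
  · intro i hi
    simp only [Finset.mem_filter, Finset.mem_univ, true_and] at hi ⊢
    refine ⟨?_, ?_⟩
    · rw [SimpleGraph.mem_edgeSet, SimpleGraph.pathGraph_adj]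
      left; simp
    · intro x hx y hy
      rw [Sym2.mem_iff] at hx hy
      rcases hx with rfl | rfl <;> rcases hy with rfl | rfl <;> first | rfl | exact hi | exact hi.symm
  · intro a _ b _ hab
    rw [Sym2.eq_iff] at hab
    rcases hab with ⟨h1, _⟩ | ⟨h1, h2⟩
    · exact Fin.castSucc_inj.mp h1
    · have e1 := congrArg Fin.val h1
      have e2 := congrArg Fin.val h2
      simp at e1 e2
      omega
  · intro e he
    simp only [Finset.mem_filter, Finset.mem_univ, true_and] at he
    induction e using Sym2.ind with
    | _ a b =>
      obtain ⟨hadj, hmono⟩ := he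
      rw [SimpleGraph.mem_edgeSet, SimpleGraph.pathGraph_adj] at hadj
      rcases hadj with h | h
      · have ha : a.val < n := by omega
        refine ⟨⟨a.val, ha⟩, ?_, ?_⟩
        · simp only [Finset.mem_filter, Finset.mem_univ, true_and]
          have hc : (⟨a.val, ha⟩ : Fin n).castSucc = a := by ext; simp
          have hs : (⟨a.val, ha⟩ : Fin n).succ = b := by ext; simp [h]
          rw [hc, hs]
          exact hmono a (by simp) b (by simp)
        · have hc : (⟨a.val, ha⟩ : Fin n).castSucc = a := by ext; simp
          have hs : (⟨a.val, ha⟩ : Fin n).succ = b := by ext; simp [h]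
          rw [hc, hs]
      · have hb : b.val < n := by omega
        refine ⟨⟨b.val, hb⟩, ?_, ?_⟩
        · simp only [Finset.mem_filter, Finset.mem_univ, true_and]
          have hc : (⟨b.val, hb⟩ : Fin n).castSucc = b := by ext; simp
          have hs : (⟨b.val, hb⟩ : Fin n).succ = a := by ext; simp [h]
          rw [hc, hs]
          exact hmono b (by simp) a (by simp)
        · have hc : (⟨b.val, hb⟩ : Fin n).castSucc = b := by ext; simp
          have hs : (⟨b.val, hb⟩ : Fin n).succ = a := by ext; simp [h]
          rw [hc, hs, Sym2.eq_swap]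

lemma pow_mEdges {B : ℝ} {q n : ℕ} (σ : Fin (n+1) → Fin q) :
    B ^ mEdges (SimpleGraph.pathGraph (n+1)) σ = pw B σ := by
  rw [mEdges_path]
  unfold pw wgt
  rw [Finset.prod_ite]
  simp

lemma denom_ge {q : ℕ} (hq : 3 ≤ q) {B : ℝ} (hB0 : 0 < B) (hB1 : B ≤ 1) :
    ∀ (n : ℕ) (Λ : Finset (Fin (n+1))) (τ : ↥Λ → Fin q), Fin.last n ∈ Λ →
      B ^ (Λ.card - 1) * ((q : ℝ) - 1 + B) ^ (n + 1 - Λ.card) ≤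
        ∑ σ : Fin (n+1) → Fin q, (if ∀ x : ↥Λ, σ x = τ x then pw B σ else 0) := by
  have hy0 : (0:ℝ) < (q : ℝ) - 1 + B := by
    have : (3:ℝ) ≤ q := by exact_mod_cast hq
    linarith
  intro n
  induction n with
  | zero =>
    intro Λ τ hlast
    have hcard : Λ.card = 1 := by
      refine le_antisymm ?_ (Finset.card_pos.mpr ⟨_, hlast⟩)
      calc Λ.card ≤ Fintype.card (Fin 1) := Finset.card_le_univ Λ
        _ = 1 := by simp
    rw [hcard]
    simp only [Nat.sub_self, pow_zero, one_mul]
    have key : (if ∀ x : ↥Λ, (fun _ : Fin (0+1) => τ ⟨Fin.last 0, hlast⟩) ↑x = τ x then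
        pw B (fun _ : Fin (0+1) => τ ⟨Fin.last 0, hlast⟩) else 0) = 1 := by
      rw [if_pos]
      · unfold pw; simp
      · intro x
        have hlt := (x : Fin (0+1)).isLt
        have hx : x = ⟨Fin.last 0, hlast⟩ := Subtype.ext (Fin.ext (by
          simp only [Fin.val_last]; omega))
        rw [hx]
    calc (1:ℝ) = _ := key.symm
      _ ≤ ∑ σ : Fin (0+1) → Fin q, (if ∀ x : ↥Λ, σ ↑x = τ x then pw B σ else 0) := by
          refine Finset.single_le_sum (f := fun σ : Fin (0+1) → Fin q =>
            (if ∀ x : ↥Λ, σ ↑x = τ x then pw B σ else 0)) (fun σ _ => ?_)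
            (Finset.mem_univ (fun _ : Fin (0+1) => τ ⟨Fin.last 0, hlast⟩))
          show (0:ℝ) ≤ if ∀ x : ↥Λ, σ ↑x = τ x then pw B σ else 0
          split
          · exact pw_nonneg hB0.le σ
          · exact le_refl 0
  | succ n ih =>
    intro Λ τ hlast
    set Λ' : Finset (Fin (n+1)) := Finset.univ.filter (fun j => j.succ ∈ Λ) with hΛ'
    have memΛ' : ∀ j : Fin (n+1), j ∈ Λ' ↔ j.succ ∈ Λ := by intro j; simp [hΛ']
    have hlast' : Fin.last n ∈ Λ' := by rw [memΛ' _, Fin.succ_last]; exact hlast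
    set τ' : ↥Λ' → Fin q := fun j => τ ⟨(j : Fin (n+1)).succ, (memΛ' _).mp j.2⟩ with hτ'
    have himg : Λ'.image Fin.succ = Λ.erase 0 := by
      ext x
      constructor
      · intro hx
        rw [Finset.mem_image] at hx
        obtain ⟨j, hj, rfl⟩ := hx
        exact Finset.mem_erase.mpr ⟨Fin.succ_ne_zero j, (memΛ' j).mp hj⟩
      · intro hx
        obtain ⟨hne, hmem⟩ := Finset.mem_erase.mp hx
        rcases Fin.eq_zero_or_eq_succ x with rfl | ⟨j, rfl⟩
        · exact absurd rfl hne
        · exact Finset.mem_image.mpr ⟨j, (memΛ' j).mpr hmem, rfl⟩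
    have hcard' : Λ'.card = (Λ.erase 0).card := by
      rw [← himg, Finset.card_image_of_injective _ (Fin.succ_injective _)]
    have hΛ'pos : 1 ≤ Λ'.card := Finset.card_pos.mpr ⟨_, hlast'⟩
    have hΛ'le : Λ'.card ≤ n + 1 := by
      calc Λ'.card ≤ Fintype.card (Fin (n+1)) := Finset.card_le_univ Λ'
        _ = n + 1 := by simp
    have hΛpos : 1 ≤ Λ.card := Finset.card_pos.mpr ⟨_, hlast⟩
    rw [sum_pi_succ]
    by_cases h0 : (0 : Fin (n+2)) ∈ Λ
    · have hcΛ : Λ.card = Λ'.card + 1 := by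
        rw [hcard', Finset.card_erase_of_mem h0]; omega
      have hiff : ∀ (c : Fin q) (σ' : Fin (n+1) → Fin q),
          (∀ x : ↥Λ, (Fin.cons c σ' : Fin (n+2) → Fin q) ↑x = τ x) ↔
            (c = τ ⟨0, h0⟩ ∧ ∀ x : ↥Λ', σ' ↑x = τ' x) := by
        intro c σ'
        constructor
        · intro H
          refine ⟨?_, ?_⟩
          · have := H ⟨0, h0⟩
            simpa using this
          · intro x
            have hm : (x : Fin (n+1)).succ ∈ Λ := (memΛ' _).mp x.2
            have := H ⟨(x : Fin (n+1)).succ, hm⟩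
            rw [Fin.cons_succ] at this
            exact this
        · rintro ⟨rfl, H⟩ x
          obtain ⟨v, hv⟩ := x
          rcases Fin.eq_zero_or_eq_succ v with rfl | ⟨j, rfl⟩
          · exact Fin.cons_zero _ _
          · exact (Fin.cons_succ _ _ _).trans (H ⟨j, (memΛ' j).mpr hv⟩)
      have step1 : ∀ (c : Fin q) (σ' : Fin (n+1) → Fin q),
          (if (∀ x : ↥Λ, (Fin.cons c σ' : Fin (n+2) → Fin q) ↑x = τ x) then pw B (Fin.cons c σ') else 0)
            = if c = τ ⟨0, h0⟩ then
                (if (∀ x : ↥Λ', σ' ↑x = τ' x) then wgt B c (σ' 0) * pw B σ' else 0) else 0 := by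
        intro c σ'
        rw [pw_cons]
        by_cases h1 : c = τ ⟨0, h0⟩
        · by_cases h2 : (∀ x : ↥Λ', σ' ↑x = τ' x)
          · rw [if_pos ((hiff c σ').mpr ⟨h1, h2⟩), if_pos h1, if_pos h2]
          · rw [if_neg (fun H => h2 ((hiff c σ').mp H).2), if_pos h1, if_neg h2]
        · rw [if_neg (fun H => h1 ((hiff c σ').mp H).1), if_neg h1]
      calc B ^ (Λ.card - 1) * ((q:ℝ) - 1 + B) ^ (n + 1 + 1 - Λ.card)
          = B * (B ^ (Λ'.card - 1) * ((q:ℝ) - 1 + B) ^ (n + 1 - Λ'.card)) := by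
            rw [show Λ.card - 1 = (Λ'.card - 1) + 1 by omega, pow_succ,
              show n + 1 + 1 - Λ.card = n + 1 - Λ'.card by omega]
            ring
        _ ≤ B * ∑ σ' : Fin (n+1) → Fin q, (if ∀ x : ↥Λ', σ' ↑x = τ' x then pw B σ' else 0) :=
            mul_le_mul_of_nonneg_left (ih Λ' τ' hlast') hB0.le
        _ = ∑ σ' : Fin (n+1) → Fin q,
              (if ∀ x : ↥Λ', σ' ↑x = τ' x then B * pw B σ' else 0) := by
            rw [Finset.mul_sum]
            refine Finset.sum_congr rfl fun σ' _ => ?_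
            split <;> simp
        _ ≤ ∑ σ' : Fin (n+1) → Fin q,
              (if ∀ x : ↥Λ', σ' ↑x = τ' x then wgt B (τ ⟨0, h0⟩) (σ' 0) * pw B σ' else 0) := by
            refine Finset.sum_le_sum fun σ' _ => ?_
            split
            · exact mul_le_mul_of_nonneg_right (B_le_wgt hB1 _ _) (pw_nonneg hB0.le σ')
            · exact le_refl 0
        _ = ∑ c : Fin q, ∑ σ' : Fin (n+1) → Fin q,
              (if (∀ x : ↥Λ, (Fin.cons c σ' : Fin (n+2) → Fin q) ↑x = τ x) then pw B (Fin.cons c σ') else 0) := by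
            simp only [step1]
            rw [Finset.sum_comm]
            refine Finset.sum_congr rfl fun σ' _ => ?_
            rw [Finset.sum_ite_eq' Finset.univ (τ ⟨0, h0⟩)
              (fun c => if (∀ x : ↥Λ', σ' ↑x = τ' x) then wgt B c (σ' 0) * pw B σ' else 0)]
            simp
    · have hcΛ : Λ.card = Λ'.card := by
        rw [hcard', Finset.erase_eq_of_notMem h0]
      have hiff : ∀ (c : Fin q) (σ' : Fin (n+1) → Fin q),
          (∀ x : ↥Λ, (Fin.cons c σ' : Fin (n+2) → Fin q) ↑x = τ x) ↔ (∀ x : ↥Λ', σ' ↑x = τ' x) := by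
        intro c σ'
        constructor
        · intro H x
          have hm : (x : Fin (n+1)).succ ∈ Λ := (memΛ' _).mp x.2
          have := H ⟨(x : Fin (n+1)).succ, hm⟩
          rw [Fin.cons_succ] at this
          exact this
        · intro H x
          obtain ⟨v, hv⟩ := x
          rcases Fin.eq_zero_or_eq_succ v with rfl | ⟨j, rfl⟩
          · exact absurd hv h0
          · exact (Fin.cons_succ _ _ _).trans (H ⟨j, (memΛ' j).mpr hv⟩)
      calc B ^ (Λ.card - 1) * ((q:ℝ) - 1 + B) ^ (n + 1 + 1 - Λ.card)
          = ((q:ℝ) - 1 + B) *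
              (B ^ (Λ'.card - 1) * ((q:ℝ) - 1 + B) ^ (n + 1 - Λ'.card)) := by
            rw [show n + 1 + 1 - Λ.card = (n + 1 - Λ'.card) + 1 by omega, pow_succ, hcΛ]
            ring
        _ ≤ ((q:ℝ) - 1 + B) *
              ∑ σ' : Fin (n+1) → Fin q, (if ∀ x : ↥Λ', σ' ↑x = τ' x then pw B σ' else 0) :=
            mul_le_mul_of_nonneg_left (ih Λ' τ' hlast') hy0.le
        _ = ∑ c : Fin q, ∑ σ' : Fin (n+1) → Fin q,
              (if (∀ x : ↥Λ, (Fin.cons c σ' : Fin (n+2) → Fin q) ↑x = τ x) then pw B (Fin.cons c σ') else 0) := by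
            rw [Finset.sum_comm, Finset.mul_sum]
            refine Finset.sum_congr rfl fun σ' _ => ?_
            have : ∀ c : Fin q,
                (if (∀ x : ↥Λ, (Fin.cons c σ' : Fin (n+2) → Fin q) ↑x = τ x) then pw B (Fin.cons c σ') else 0)
                  = if (∀ x : ↥Λ', σ' ↑x = τ' x) then wgt B c (σ' 0) * pw B σ' else 0 := by
              intro c
              rw [pw_cons]
              by_cases h2 : (∀ x : ↥Λ', σ' ↑x = τ' x)
              · rw [if_pos ((hiff c σ').mpr h2), if_pos h2]
              · rw [if_neg (fun H => h2 ((hiff c σ').mp H)), if_neg h2]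
            simp only [this]
            split
            · rw [← Finset.sum_mul, sum_wgt]
            · simp

lemma numer_le {q : ℕ} {B : ℝ} (hB0 : 0 < B) (hB1 : B ≤ 1) :
    ∀ (n : ℕ) (c₁ c₂ : Fin q),
      ∑ σ : Fin (n+1) → Fin q,
          (if ∀ w : Fin (n+1), σ w = c₁ ∨ σ w = c₂ then pw B σ else 0)
        ≤ 2 * (1 + B) ^ n := by
  intro n
  induction n with
  | zero =>
    intro c₁ c₂
    have hle : ∀ σ : Fin (0+1) → Fin q,
        (if ∀ w : Fin (0+1), σ w = c₁ ∨ σ w = c₂ then pw B σ else 0)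
          ≤ (if σ 0 = c₁ then 1 else 0) + (if σ 0 = c₂ then 1 else 0) := by
      intro σ
      split
      · rename_i h
        have h0 := h 0
        have hpw : pw B σ = 1 := by unfold pw; simp
        rw [hpw]
        rcases h0 with h0 | h0
        · rw [if_pos h0]
          have : (0:ℝ) ≤ (if σ 0 = c₂ then (1:ℝ) else 0) := by split <;> norm_num
          linarith
        · rw [if_pos h0]
          have : (0:ℝ) ≤ (if σ 0 = c₁ then (1:ℝ) else 0) := by split <;> norm_num
          linarith
      · positivity
    calc ∑ σ : Fin (0+1) → Fin q,
            (if ∀ w : Fin (0+1), σ w = c₁ ∨ σ w = c₂ then pw B σ else 0)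
        ≤ ∑ σ : Fin (0+1) → Fin q,
            ((if σ 0 = c₁ then (1:ℝ) else 0) + (if σ 0 = c₂ then 1 else 0)) :=
          Finset.sum_le_sum fun σ _ => hle σ
      _ = ∑ x : Fin q, ((if x = c₁ then (1:ℝ) else 0) + (if x = c₂ then 1 else 0)) := by
          exact (Equiv.sum_comp
            (⟨fun x _ => x, fun σ => σ 0, fun _ => rfl, fun σ => funext fun i => by
              have hi : i = 0 := by
                have h := i.isLt
                apply Fin.ext
                simp only [Fin.val_zero]
                omega
              rw [hi]⟩ : Fin q ≃ (Fin (0+1) → Fin q))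
            (fun σ : Fin (0+1) → Fin q =>
              ((if σ 0 = c₁ then (1:ℝ) else 0) + (if σ 0 = c₂ then 1 else 0)))).symm
      _ = 2 := by
          rw [Finset.sum_add_distrib, Finset.sum_ite_eq' Finset.univ c₁ (fun _ => (1:ℝ)),
            Finset.sum_ite_eq' Finset.univ c₂ (fun _ => (1:ℝ))]
          norm_num
      _ ≤ 2 * (1 + B) ^ 0 := by norm_num
  | succ n ih =>
    intro c₁ c₂
    rw [sum_pi_succ]
    have hiff : ∀ (c : Fin q) (σ' : Fin (n+1) → Fin q),
        (∀ w : Fin (n+2), (Fin.cons c σ' : Fin (n+2) → Fin q) w = c₁ ∨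
            (Fin.cons c σ' : Fin (n+2) → Fin q) w = c₂)
          ↔ ((c = c₁ ∨ c = c₂) ∧ ∀ w : Fin (n+1), σ' w = c₁ ∨ σ' w = c₂) := by
      intro c σ'
      constructor
      · intro H
        refine ⟨?_, fun w => ?_⟩
        · have := H 0
          simpa using this
        · have := H w.succ
          rwa [Fin.cons_succ] at this
      · rintro ⟨hc, H⟩ w
        rcases Fin.eq_zero_or_eq_succ w with rfl | ⟨j, rfl⟩
        · simpa using hc
        · rw [Fin.cons_succ]
          exact H j
    have step1 : ∀ (c : Fin q) (σ' : Fin (n+1) → Fin q),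
        (if (∀ w : Fin (n+2), (Fin.cons c σ' : Fin (n+2) → Fin q) w = c₁ ∨
              (Fin.cons c σ' : Fin (n+2) → Fin q) w = c₂)
          then pw B (Fin.cons c σ') else 0)
          = if (c = c₁ ∨ c = c₂) then
              (if (∀ w : Fin (n+1), σ' w = c₁ ∨ σ' w = c₂) then wgt B c (σ' 0) * pw B σ' else 0)
            else 0 := by
      intro c σ'
      rw [pw_cons]
      by_cases h1 : c = c₁ ∨ c = c₂
      · by_cases h2 : ∀ w : Fin (n+1), σ' w = c₁ ∨ σ' w = c₂
        · rw [if_pos ((hiff c σ').mpr ⟨h1, h2⟩), if_pos h1, if_pos h2]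
        · rw [if_neg (fun H => h2 ((hiff c σ').mp H).2), if_pos h1, if_neg h2]
      · rw [if_neg (fun H => h1 ((hiff c σ').mp H).1), if_neg h1]
    simp only [step1]
    rw [Finset.sum_comm]
    have inner : ∀ σ' : Fin (n+1) → Fin q,
        (∑ c : Fin q, if (c = c₁ ∨ c = c₂) then
            (if (∀ w : Fin (n+1), σ' w = c₁ ∨ σ' w = c₂) then wgt B c (σ' 0) * pw B σ' else 0)
          else 0)
          ≤ if (∀ w : Fin (n+1), σ' w = c₁ ∨ σ' w = c₂) then (1 + B) * pw B σ' else 0 := by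
      intro σ'
      by_cases h2 : ∀ w : Fin (n+1), σ' w = c₁ ∨ σ' w = c₂
      · have hrw : ∀ c : Fin q,
            (if (c = c₁ ∨ c = c₂) then
              (if (∀ w : Fin (n+1), σ' w = c₁ ∨ σ' w = c₂) then wgt B c (σ' 0) * pw B σ' else 0)
            else 0) = (if (c = c₁ ∨ c = c₂) then wgt B c (σ' 0) * pw B σ' else 0) :=
          fun c => by rw [if_pos h2]
        simp only [hrw]
        rw [if_pos h2]
        have hb : ∀ c : Fin q,
            (if (c = c₁ ∨ c = c₂) then wgt B c (σ' 0) * pw B σ' else 0)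
              ≤ (if c = c₁ then wgt B c (σ' 0) * pw B σ' else 0)
                + (if c = c₂ then wgt B c (σ' 0) * pw B σ' else 0) := by
          intro c
          have hnn : 0 ≤ wgt B c (σ' 0) * pw B σ' :=
            mul_nonneg (wgt_nonneg hB0.le _ _) (pw_nonneg hB0.le _)
          by_cases e1 : c = c₁
          · rw [if_pos (Or.inl e1), if_pos e1]
            have : (0:ℝ) ≤ if c = c₂ then wgt B c (σ' 0) * pw B σ' else 0 := by
              split
              · exact hnn
              · exact le_refl 0
            linarith
          · by_cases e2 : c = c₂
            · rw [if_pos (Or.inr e2), if_neg e1, if_pos e2]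
              linarith
            · rw [if_neg (by tauto), if_neg e1, if_neg e2]
              norm_num
        calc (∑ c : Fin q, if (c = c₁ ∨ c = c₂) then wgt B c (σ' 0) * pw B σ' else 0)
            ≤ ∑ c : Fin q, ((if c = c₁ then wgt B c (σ' 0) * pw B σ' else 0)
                + (if c = c₂ then wgt B c (σ' 0) * pw B σ' else 0)) :=
              Finset.sum_le_sum fun c _ => hb c
          _ = wgt B c₁ (σ' 0) * pw B σ' + wgt B c₂ (σ' 0) * pw B σ' := by
              rw [Finset.sum_add_distrib,
                Finset.sum_ite_eq' Finset.univ c₁ (fun c => wgt B c (σ' 0) * pw B σ'),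
                Finset.sum_ite_eq' Finset.univ c₂ (fun c => wgt B c (σ' 0) * pw B σ')]
              simp
          _ = (wgt B c₁ (σ' 0) + wgt B c₂ (σ' 0)) * pw B σ' := by ring
          _ ≤ (1 + B) * pw B σ' := by
              refine mul_le_mul_of_nonneg_right ?_ (pw_nonneg hB0.le _)
              have h00 := h2 0
              rcases h00 with h00 | h00
              · have w1 : wgt B c₁ (σ' 0) = B := by unfold wgt; rw [if_pos h00.symm]
                have w2 : wgt B c₂ (σ' 0) ≤ 1 := wgt_le_one hB1 _ _
                linarith
              · have w2 : wgt B c₂ (σ' 0) = B := by unfold wgt; rw [if_pos h00.symm]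
                have w1 : wgt B c₁ (σ' 0) ≤ 1 := wgt_le_one hB1 _ _
                linarith
      · have hrw : ∀ c : Fin q,
            (if (c = c₁ ∨ c = c₂) then
              (if (∀ w : Fin (n+1), σ' w = c₁ ∨ σ' w = c₂) then wgt B c (σ' 0) * pw B σ' else 0)
            else 0) = 0 := fun c => by rw [if_neg h2]; split <;> rfl
        simp only [hrw]
        rw [if_neg h2, Finset.sum_const_zero]
    calc (∑ σ' : Fin (n+1) → Fin q, ∑ c : Fin q, if (c = c₁ ∨ c = c₂) then
            (if (∀ w : Fin (n+1), σ' w = c₁ ∨ σ' w = c₂) then wgt B c (σ' 0) * pw B σ' else 0)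
          else 0)
        ≤ ∑ σ' : Fin (n+1) → Fin q,
            (if (∀ w : Fin (n+1), σ' w = c₁ ∨ σ' w = c₂) then (1 + B) * pw B σ' else 0) :=
          Finset.sum_le_sum fun σ' _ => inner σ'
      _ = (1 + B) * ∑ σ' : Fin (n+1) → Fin q,
            (if (∀ w : Fin (n+1), σ' w = c₁ ∨ σ' w = c₂) then pw B σ' else 0) := by
          rw [Finset.mul_sum]
          refine Finset.sum_congr rfl fun σ' _ => ?_
          split <;> simp
      _ ≤ (1 + B) * (2 * (1 + B) ^ n) :=
          mul_le_mul_of_nonneg_left (ih c₁ c₂) (by linarith)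
      _ = 2 * (1 + B) ^ (n + 1) := by ring

lemma ite_inst (p p' : Prop) (hpq : p = p') {i1 : Decidable p} {i2 : Decidable p'} (a b : ℝ) :
    @ite ℝ p i1 a b = @ite ℝ p' i2 a b := by
  subst hpq
  rw [Subsingleton.elim i1 i2]

lemma sum_univ_ext {α : Type} {i1 i2 : Fintype α} (f g : α → ℝ) (h : ∀ a, f a = g a) :
    @Finset.sum α ℝ _ (@Finset.univ α i1) f = @Finset.sum α ℝ _ (@Finset.univ α i2) g := by
  have he : i1 = i2 := Subsingleton.elim _ _
  subst he
  exact Finset.sum_congr rfl fun a _ => h a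

lemma final_ineq (q k ℓ : ℕ) (hq : 3 ≤ q) (hk : 2 ≤ k) (hkl : k ≤ ℓ) (B : ℝ)
    (hB0 : 0 < B) (hB1 : B < 1) :
    ((q:ℝ)^2 * (2 * (1+B)^(ℓ-1))) / (B^(k-1) * ((q:ℝ)-1+B)^(ℓ-k)) ≤
      (4*q/B)^k * ((1+B)/(B+(q:ℝ)-1))^((ℓ:ℤ) - 2*(k:ℤ)) := by
  have hq3 : (3:ℝ) ≤ q := by exact_mod_cast hq
  set x : ℝ := 1 + B with hxdef
  set y : ℝ := (q:ℝ) - 1 + B with hydef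
  have hyy : B + (q:ℝ) - 1 = y := by rw [hydef]; ring
  rw [hyy]
  have hx0 : 0 < x := by rw [hxdef]; linarith
  have hx2 : x ≤ 2 := by rw [hxdef]; linarith
  have hy0 : 0 < y := by rw [hydef]; linarith
  have hy2 : 2 ≤ y := by rw [hydef]; linarith
  have hq0 : (0:ℝ) < q := by linarith
  have core : 2*(q:ℝ)^2*x^(2*k-1) ≤ (4*(q:ℝ))^k * y^k / B := by
    have h1 : x^(2*k-1) ≤ 2^(2*k-1) := pow_le_pow_left₀ hx0.le hx2 _
    have h2 : (2:ℝ)*2^(2*k-1) = 2^(2*k) := by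
      rw [← pow_succ']
      congr 1
      omega
    have h3 : ((4:ℝ)*q)^k * y^k = 2^(2*k) * ((q:ℝ)*y)^k := by
      rw [mul_pow, mul_pow, show ((4:ℝ)) = 2^2 by norm_num, ← pow_mul]
      ring
    have h4 : (q:ℝ)^2 ≤ ((q:ℝ)*y)^k := by
      calc (q:ℝ)^2 ≤ ((q:ℝ)*y)^2 := by
            have hy1 : (1:ℝ) ≤ y^2 := by nlinarith
            have hqq : (0:ℝ) ≤ (q:ℝ)^2 := sq_nonneg _
            nlinarith
        _ ≤ ((q:ℝ)*y)^k := pow_le_pow_right₀ (by nlinarith) hk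
    have h5 : ((4:ℝ)*q)^k * y^k ≤ ((4:ℝ)*q)^k * y^k / B := by
      rw [le_div_iff₀ hB0]
      nlinarith [pow_pos (show (0:ℝ) < 4*q by linarith) k, pow_pos hy0 k,
        mul_pos (pow_pos (show (0:ℝ) < 4*q by linarith) k) (pow_pos hy0 k)]
    calc 2*(q:ℝ)^2*x^(2*k-1) ≤ 2*(q:ℝ)^2*2^(2*k-1) := by nlinarith
      _ = (q:ℝ)^2 * 2^(2*k) := by rw [← h2]; ring
      _ ≤ ((q:ℝ)*y)^k * 2^(2*k) := by
          have h6 : (0:ℝ) < 2^(2*k) := by positivity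
          nlinarith
      _ = ((4:ℝ)*q)^k * y^k := by rw [h3]; ring
      _ ≤ _ := h5
  have hD : (0:ℝ) < B^(k-1) * y^(ℓ-k) := by positivity
  rw [div_le_iff₀ hD]
  have e1 : x ^ (ℓ-1) = x ^ ((ℓ:ℤ) - 2*(k:ℤ)) * x ^ (2*k-1) := by
    rw [← zpow_natCast x (ℓ-1), ← zpow_natCast x (2*k-1), ← zpow_add₀ hx0.ne']
    congr 1
    omega
  have e2 : y ^ (ℓ-k) = y ^ ((ℓ:ℤ) - 2*(k:ℤ)) * y ^ (k:ℕ) := by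
    rw [← zpow_natCast y (ℓ-k), ← zpow_natCast y k, ← zpow_add₀ hy0.ne']
    congr 1
    omega
  have e3 : B ^ (k-1) = B^(k:ℕ) / B := by
    rw [eq_div_iff hB0.ne', ← pow_succ]
    congr 1
    omega
  have e4 : (x/y)^((ℓ:ℤ) - 2*(k:ℤ)) = x^((ℓ:ℤ) - 2*(k:ℤ)) / y^((ℓ:ℤ) - 2*(k:ℤ)) :=
    div_zpow x y _
  have e5 : (4*(q:ℝ)/B)^k = (4*(q:ℝ))^k / B^k := div_pow _ _ _
  have hym : y^((ℓ:ℤ) - 2*(k:ℤ)) ≠ 0 := zpow_ne_zero _ hy0.ne'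
  have hxm : (0:ℝ) ≤ x^((ℓ:ℤ) - 2*(k:ℤ)) := zpow_nonneg hx0.le _
  have hbk : B^k ≠ 0 := pow_ne_zero _ hB0.ne'
  calc (q:ℝ)^2 * (2 * x^(ℓ-1)) = (2*(q:ℝ)^2*x^(2*k-1)) * x^((ℓ:ℤ) - 2*(k:ℤ)) := by
        rw [e1]; ring
    _ ≤ ((4*(q:ℝ))^k * y^k / B) * x^((ℓ:ℤ) - 2*(k:ℤ)) :=
        mul_le_mul_of_nonneg_right core hxm
    _ = (4*(q:ℝ)/B)^k * (x/y)^((ℓ:ℤ) - 2*(k:ℤ)) * (B^(k-1) * y^(ℓ-k)) := by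
        rw [e5, e4, e3, e2]
        field_simp

set_option maxHeartbeats 1000000 in
theorem stmt16 (q : ℕ) (hq : 3 ≤ q) (B : ℝ) (hB : B ∈ Set.Ioo (0 : ℝ) 1)
    (ℓ : ℕ) (hℓ : 2 ≤ ℓ) (Λ : Finset (Fin ℓ))
    (h0 : (⟨0, by omega⟩ : Fin ℓ) ∈ Λ) (h1 : (⟨ℓ - 1, by omega⟩ : Fin ℓ) ∈ Λ)
    (τ : ↥Λ → Fin q) :
    pottsCond (SimpleGraph.pathGraph ℓ) q B
        {σ | ∃ c₁ c₂ : Fin q, ∀ w : Fin ℓ, σ w = c₁ ∨ σ w = c₂}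
        {σ | ∀ x : ↥Λ, σ x = τ x} ≤
      (4 * q / B) ^ Λ.card *
        ((1 + B) / (B + (q : ℝ) - 1)) ^ ((ℓ : ℤ) - 2 * (Λ.card : ℤ)) := by
  obtain ⟨hB0, hB1⟩ := hB
  obtain ⟨n, rfl⟩ : ∃ n, ℓ = n + 1 := ⟨ℓ - 1, by omega⟩
  have hn : 1 ≤ n := by omega
  have hy0 : (0:ℝ) < (q:ℝ) - 1 + B := by
    have hq3 : (3:ℝ) ≤ q := by exact_mod_cast hq
    linarith
  have hlast : Fin.last n ∈ Λ := by
    have he : (⟨n + 1 - 1, by omega⟩ : Fin (n+1)) = Fin.last n := by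
      apply Fin.ext
      simp
    rwa [he] at h1
  have hzero : (0 : Fin (n+1)) ∈ Λ := by
    have he : (⟨0, by omega⟩ : Fin (n+1)) = 0 := by
      apply Fin.ext
      simp
    rwa [he] at h0
  have hk2 : 2 ≤ Λ.card := by
    have hne : (0 : Fin (n+1)) ≠ Fin.last n := by
      intro h
      have := congrArg Fin.val h
      simp only [Fin.val_zero, Fin.val_last] at this
      omega
    have hsub : ({0, Fin.last n} : Finset (Fin (n+1))) ⊆ Λ := by
      intro z hz
      rcases Finset.mem_insert.mp hz with rfl | hz
      · exact hzero
      · rw [Finset.mem_singleton] at hz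
        rw [hz]
        exact hlast
    calc 2 = ({0, Fin.last n} : Finset (Fin (n+1))).card := (Finset.card_pair hne).symm
      _ ≤ Λ.card := Finset.card_le_card hsub
  have hkl : Λ.card ≤ n + 1 := by
    calc Λ.card ≤ Fintype.card (Fin (n+1)) := Finset.card_le_univ Λ
      _ = n + 1 := by simp
  have hEq : pottsCond (SimpleGraph.pathGraph (n+1)) q B
      {σ | ∃ c₁ c₂ : Fin q, ∀ w : Fin (n+1), σ w = c₁ ∨ σ w = c₂}
      {σ | ∀ x : ↥Λ, σ x = τ x}
      = (∑ σ : Fin (n+1) → Fin q,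
          if (∃ c₁ c₂ : Fin q, ∀ w : Fin (n+1), σ w = c₁ ∨ σ w = c₂) ∧ (∀ x : ↥Λ, σ ↑x = τ x)
          then B ^ mEdges (SimpleGraph.pathGraph (n+1)) σ else 0)
        / (∑ σ : Fin (n+1) → Fin q,
          if (∀ x : ↥Λ, σ ↑x = τ x) then B ^ mEdges (SimpleGraph.pathGraph (n+1)) σ else 0) := by
    unfold pottsCond
    congr 1
    · exact sum_univ_ext _ _ fun a => ite_inst _ _ rfl _ _
    · exact sum_univ_ext _ _ fun a => ite_inst _ _ rfl _ _
  rw [hEq]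
  -- rewrite weights
  have hNum : (∑ σ : Fin (n+1) → Fin q,
        if (∃ c₁ c₂ : Fin q, ∀ w : Fin (n+1), σ w = c₁ ∨ σ w = c₂) ∧ (∀ x : ↥Λ, σ ↑x = τ x)
        then B ^ mEdges (SimpleGraph.pathGraph (n+1)) σ else 0)
      ≤ (q:ℝ)^2 * (2 * (1+B)^n) := by
    have step1 : (∑ σ : Fin (n+1) → Fin q,
          if (∃ c₁ c₂ : Fin q, ∀ w : Fin (n+1), σ w = c₁ ∨ σ w = c₂) ∧ (∀ x : ↥Λ, σ ↑x = τ x)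
          then B ^ mEdges (SimpleGraph.pathGraph (n+1)) σ else 0)
        ≤ ∑ σ : Fin (n+1) → Fin q, ∑ c₁ : Fin q, ∑ c₂ : Fin q,
            (if ∀ w : Fin (n+1), σ w = c₁ ∨ σ w = c₂ then pw B σ else 0) := by
      refine Finset.sum_le_sum fun σ _ => ?_
      rw [pow_mEdges σ]
      split
      · rename_i hcond
        obtain ⟨⟨c₁, c₂, hP⟩, -⟩ := hcond
        have t1 : pw B σ ≤ ∑ c₂' : Fin q,
            (if ∀ w : Fin (n+1), σ w = c₁ ∨ σ w = c₂' then pw B σ else 0) := by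
          have := Finset.single_le_sum (f := fun c₂' : Fin q =>
              (if ∀ w : Fin (n+1), σ w = c₁ ∨ σ w = c₂' then pw B σ else 0))
            (fun c _ => by
              show (0:ℝ) ≤ if ∀ w : Fin (n+1), σ w = c₁ ∨ σ w = c then pw B σ else 0
              split
              · exact pw_nonneg hB0.le σ
              · exact le_refl 0)
            (Finset.mem_univ c₂)
          rwa [if_pos hP] at this
        have t2 : (∑ c₂' : Fin q,
              (if ∀ w : Fin (n+1), σ w = c₁ ∨ σ w = c₂' then pw B σ else 0))
            ≤ ∑ c₁' : Fin q, ∑ c₂' : Fin q,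
              (if ∀ w : Fin (n+1), σ w = c₁' ∨ σ w = c₂' then pw B σ else 0) := by
          refine Finset.single_le_sum (f := fun c₁' : Fin q => ∑ c₂' : Fin q,
              (if ∀ w : Fin (n+1), σ w = c₁' ∨ σ w = c₂' then pw B σ else 0))
            (fun c _ => ?_) (Finset.mem_univ c₁)
          refine Finset.sum_nonneg fun c' _ => ?_
          split
          · exact pw_nonneg hB0.le σ
          · exact le_refl 0
        exact le_trans t1 t2
      · refine Finset.sum_nonneg fun c _ => Finset.sum_nonneg fun c' _ => ?_
        split
        · exact pw_nonneg hB0.le σ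
        · exact le_refl 0
    calc (∑ σ : Fin (n+1) → Fin q,
          if (∃ c₁ c₂ : Fin q, ∀ w : Fin (n+1), σ w = c₁ ∨ σ w = c₂) ∧ (∀ x : ↥Λ, σ ↑x = τ x)
          then B ^ mEdges (SimpleGraph.pathGraph (n+1)) σ else 0)
        ≤ ∑ σ : Fin (n+1) → Fin q, ∑ c₁ : Fin q, ∑ c₂ : Fin q,
            (if ∀ w : Fin (n+1), σ w = c₁ ∨ σ w = c₂ then pw B σ else 0) := step1
      _ = ∑ c₁ : Fin q, ∑ c₂ : Fin q, ∑ σ : Fin (n+1) → Fin q,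
            (if ∀ w : Fin (n+1), σ w = c₁ ∨ σ w = c₂ then pw B σ else 0) := by
          rw [Finset.sum_comm]
          refine Finset.sum_congr rfl fun c₁ _ => ?_
          rw [Finset.sum_comm]
      _ ≤ ∑ c₁ : Fin q, ∑ c₂ : Fin q, (2 * (1+B)^n : ℝ) := by
          refine Finset.sum_le_sum fun c₁ _ => Finset.sum_le_sum fun c₂ _ => ?_
          exact numer_le hB0 hB1.le n c₁ c₂
      _ = (q:ℝ)^2 * (2 * (1+B)^n) := by
          rw [Finset.sum_const, Finset.sum_const]
          simp only [Finset.card_univ, Fintype.card_fin, nsmul_eq_mul, smul_eq_mul]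
          push_cast
          ring
  have hDen : B ^ (Λ.card - 1) * ((q:ℝ) - 1 + B) ^ (n + 1 - Λ.card)
      ≤ ∑ σ : Fin (n+1) → Fin q,
          (if ∀ x : ↥Λ, σ ↑x = τ x then B ^ mEdges (SimpleGraph.pathGraph (n+1)) σ else 0) := by
    have := denom_ge hq hB0 hB1.le n Λ τ hlast
    calc B ^ (Λ.card - 1) * ((q:ℝ) - 1 + B) ^ (n + 1 - Λ.card)
        ≤ ∑ σ : Fin (n+1) → Fin q, (if ∀ x : ↥Λ, σ ↑x = τ x then pw B σ else 0) := this
      _ = ∑ σ : Fin (n+1) → Fin q,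
          (if ∀ x : ↥Λ, σ ↑x = τ x then B ^ mEdges (SimpleGraph.pathGraph (n+1)) σ else 0) := by
          refine Finset.sum_congr rfl fun σ _ => ?_
          rw [pow_mEdges σ]
  have hD0 : (0:ℝ) < B ^ (Λ.card - 1) * ((q:ℝ) - 1 + B) ^ (n + 1 - Λ.card) :=
    mul_pos (pow_pos hB0 _) (pow_pos hy0 _)
  have hN0 : (0:ℝ) ≤ (q:ℝ)^2 * (2 * (1+B)^n) := by positivity
  have main := div_le_div₀ hN0 hNum hD0 hDen
  refine le_trans main ?_
  have := final_ineq q Λ.card (n+1) hq hk2 hkl B hB0 hB1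
  simpa using this
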